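/- Let N = 3 and, for a permutation π ∈ S_3, define E(π) = (r_1−b_{π(1)})² + (r_1−b_{π(3)})² + (r_3−b_{π(2)})² + (r_3−b_{π(1)})² + (r_2−b_{π(3)})² + (r_2−b_{π(2)})², where r and b are the increasing order statistics of two independent samples of 3 i.i.d. uniform points on [0,1]. Then E[E((2,3,1))] = 3/4, E[E((1,3,2))] = E[E((3,2,1))] = 7/8, E[E((1,2,3))] = E[E((3,1,2))] = 9/8, and E[E((2,1,3))] = 5/4; in particular the criss-cross cycle π = (2,3,1) has the smallest average cost. -/

import Mathlib

open MeasureTheory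

/-- The law of a pair of two independent samples of `N` i.i.d. points uniformly
distributed on `[0,1]` (red sample, blue sample). -/
noncomputable def unifPair (N : ℕ) : Measure ((Fin N → ℝ) × (Fin N → ℝ)) :=
  (Measure.pi fun _ : Fin N => volume.restrict (Set.Icc (0:ℝ) 1)).prod
    (Measure.pi fun _ : Fin N => volume.restrict (Set.Icc (0:ℝ) 1))

/-- The increasing order statistics of a finite sample `x`. -/
noncomputable def orderStat {N : ℕ} (x : Fin N → ℝ) : Fin N → ℝ := x ∘ Tuple.sort x

/-- The cost `E(π)` of the Hamiltonian cycle of `K_{3,3}` with red-point order fixed by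
`σ̃ = (1,3,2)` and blue points visited in the order prescribed by `π`, cost exponent
`p = 2`:  `E(π) = (r₁−b_{π(1)})² + (r₁−b_{π(3)})² + (r₃−b_{π(2)})² + (r₃−b_{π(1)})²
+ (r₂−b_{π(3)})² + (r₂−b_{π(2)})²` (written 0-indexed below), where `r`, `b` are the
increasing order statistics of the two samples of 3 uniform points. -/
noncomputable def costN3 (π : Fin 3 → Fin 3) (q : (Fin 3 → ℝ) × (Fin 3 → ℝ)) : ℝ :=
  (orderStat q.1 0 - orderStat q.2 (π 0)) ^ 2 + (orderStat q.1 0 - orderStat q.2 (π 2)) ^ 2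
  + (orderStat q.1 2 - orderStat q.2 (π 1)) ^ 2 + (orderStat q.1 2 - orderStat q.2 (π 0)) ^ 2
  + (orderStat q.1 1 - orderStat q.2 (π 2)) ^ 2 + (orderStat q.1 1 - orderStat q.2 (π 1)) ^ 2

namespace AvgCost3

/-! ### Order statistics for three points -/

variable {N : ℕ}

lemma orderStat_le (x : Fin N → ℝ) {i j : Fin N} (h : i ≤ j) : orderStat x i ≤ orderStat x j :=
  Tuple.monotone_sort x h

lemma orderStat_mem (x : Fin N → ℝ) (i : Fin N) : ∃ j, x j = orderStat x i := ⟨Tuple.sort x i, rfl⟩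

lemma mem_orderStat (x : Fin N → ℝ) (i : Fin N) : ∃ j, orderStat x j = x i :=
  ⟨(Tuple.sort x).symm i, by simp [orderStat]⟩

lemma orderStat0 (x : Fin 3 → ℝ) : orderStat x 0 = min (x 0) (min (x 1) (x 2)) := by
  apply le_antisymm
  · have h : ∀ i, orderStat x 0 ≤ x i := by
      intro i
      obtain ⟨j, hj⟩ := mem_orderStat x i
      rw [← hj]
      exact orderStat_le x (Fin.zero_le j)
    exact le_min (h 0) (le_min (h 1) (h 2))
  · obtain ⟨j, hj⟩ := orderStat_mem x 0
    rw [← hj]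
    fin_cases j
    · exact min_le_left _ _
    · exact le_trans (min_le_right _ _) (min_le_left _ _)
    · exact le_trans (min_le_right _ _) (min_le_right _ _)

lemma orderStat2 (x : Fin 3 → ℝ) : orderStat x 2 = max (x 0) (max (x 1) (x 2)) := by
  apply le_antisymm
  · obtain ⟨j, hj⟩ := orderStat_mem x 2
    rw [← hj]
    fin_cases j
    · exact le_max_left _ _
    · exact le_trans (le_max_left _ _) (le_max_right _ _)
    · exact le_trans (le_max_right _ _) (le_max_right _ _)
  · have h : ∀ i, x i ≤ orderStat x 2 := by
      intro i
      obtain ⟨j, hj⟩ := mem_orderStat x i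
      rw [← hj]
      exact orderStat_le x (by exact Fin.le_last j)
    exact max_le (h 0) (max_le (h 1) (h 2))

lemma orderStat1 (x : Fin 3 → ℝ) :
    orderStat x 1 = x 0 + x 1 + x 2 - orderStat x 0 - orderStat x 2 := by
  have h := Equiv.sum_comp (Tuple.sort x) x
  simp only [Fin.sum_univ_three] at h
  have h2 : orderStat x 0 + orderStat x 1 + orderStat x 2 = x 0 + x 1 + x 2 := by
    simpa [orderStat] using h
  linarith

/-! ### Measures -/

noncomputable def m1 : Measure ℝ := volume.restrict (Set.Icc (0:ℝ) 1)
noncomputable def n3 : Measure (ℝ × ℝ × ℝ) := m1.prod (m1.prod m1)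
instance : IsProbabilityMeasure m1 := ⟨by simp [m1, Real.volume_Icc]⟩
instance : IsProbabilityMeasure n3 := by unfold n3; infer_instance

lemma n3_eq : n3 = volume.restrict ((Set.Icc 0 1) ×ˢ ((Set.Icc 0 1) ×ˢ (Set.Icc (0:ℝ) 1))) := by
  rw [n3, m1, Measure.prod_restrict, Measure.prod_restrict,
    ← Measure.volume_eq_prod, ← Measure.volume_eq_prod]

lemma integrable_m1 {f : ℝ → ℝ} (hf : Continuous f) : Integrable f m1 := by
  rw [m1]
  exact hf.continuousOn.integrableOn_compact isCompact_Icc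

lemma integrable_n2 {f : ℝ × ℝ → ℝ} (hf : Continuous f) : Integrable f (m1.prod m1) := by
  rw [m1, Measure.prod_restrict, ← Measure.volume_eq_prod]
  exact hf.continuousOn.integrableOn_compact (isCompact_Icc.prod isCompact_Icc)

lemma integrable_n3 {f : ℝ × ℝ × ℝ → ℝ} (hf : Continuous f) : Integrable f n3 := by
  rw [n3_eq]
  exact hf.continuousOn.integrableOn_compact
    (isCompact_Icc.prod (isCompact_Icc.prod isCompact_Icc))

instance : IsFiniteMeasureOnCompacts (volume : Measure ((ℝ×ℝ×ℝ)×(ℝ×ℝ×ℝ))) :=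
  Measure.prod.instIsFiniteMeasureOnCompacts _ _

lemma integrable_n6 {f : (ℝ × ℝ × ℝ) × (ℝ × ℝ × ℝ) → ℝ} (hf : Continuous f) :
    Integrable f (n3.prod n3) := by
  rw [n3_eq, Measure.prod_restrict, ← Measure.volume_eq_prod]
  exact hf.continuousOn.integrableOn_compact
    (((isCompact_Icc.prod (isCompact_Icc.prod isCompact_Icc))).prod
      ((isCompact_Icc.prod (isCompact_Icc.prod isCompact_Icc))))

/-! ### Change of variables -/

noncomputable def e3 : (Fin 3 → ℝ) ≃ᵐ ℝ × (ℝ × ℝ) :=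
  (MeasurableEquiv.piFinSuccAbove (fun _ => ℝ) 0).trans
    ((MeasurableEquiv.refl ℝ).prodCongr MeasurableEquiv.finTwoArrow)

lemma e3_apply (x : Fin 3 → ℝ) : e3 x = (x 0, x 1, x 2) := rfl

lemma mp3 : MeasurePreserving (⇑e3) (Measure.pi fun _ : Fin 3 => m1) n3 := by
  have h1 := measurePreserving_piFinSuccAbove (fun _ : Fin 3 => m1) 0
  have h2 := (MeasurePreserving.id m1).prod (measurePreserving_finTwoArrow (α := ℝ) m1)
  exact h2.comp h1

/-! ### One-dimensional integrals -/

lemma integral_m1 (f : ℝ → ℝ) : ∫ x, f x ∂m1 = ∫ x in (0:ℝ)..1, f x := by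
  rw [intervalIntegral.integral_of_le zero_le_one, m1, ← integral_Icc_eq_integral_Ioc]

lemma poly_int (c0 c1 c2 c3 : ℝ) :
    ∫ x in (0:ℝ)..1, (c0 + c1 * x + c2 * x ^ 2 + c3 * x ^ 3) = c0 + c1 / 2 + c2 / 3 + c3 / 4 := by
  have i0 : IntervalIntegrable (fun _ : ℝ => c0) volume 0 1 := intervalIntegrable_const
  have i1 : IntervalIntegrable (fun x : ℝ => c1 * x) volume 0 1 :=
    (continuous_const.mul continuous_id).intervalIntegrable _ _
  have i2 : IntervalIntegrable (fun x : ℝ => c2 * x ^ 2) volume 0 1 :=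
    (continuous_const.mul (continuous_id.pow 2)).intervalIntegrable _ _
  have i3 : IntervalIntegrable (fun x : ℝ => c3 * x ^ 3) volume 0 1 :=
    (continuous_const.mul (continuous_id.pow 3)).intervalIntegrable _ _
  rw [intervalIntegral.integral_add ((i0.add i1).add i2) i3,
    intervalIntegral.integral_add (i0.add i1) i2,
    intervalIntegral.integral_add i0 i1,
    intervalIntegral.integral_const, intervalIntegral.integral_const_mul,
    intervalIntegral.integral_const_mul, intervalIntegral.integral_const_mul,
    integral_id, integral_pow, integral_pow]
  norm_num [mul_one_div]

lemma int_min {t : ℝ} (h0 : 0 ≤ t) (h1 : t ≤ 1) :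
    ∫ c in (0:ℝ)..1, min t c = t - t ^ 2 / 2 := by
  have hi1 : IntervalIntegrable (fun c => min t c) volume 0 t :=
    (continuous_const.min continuous_id).intervalIntegrable _ _
  have hi2 : IntervalIntegrable (fun c => min t c) volume t 1 :=
    (continuous_const.min continuous_id).intervalIntegrable _ _
  rw [← intervalIntegral.integral_add_adjacent_intervals hi1 hi2]
  have A : ∫ c in (0:ℝ)..t, min t c = ∫ c in (0:ℝ)..t, c := by
    apply intervalIntegral.integral_congr
    intro c hc
    rw [Set.uIcc_of_le h0] at hc
    exact min_eq_right hc.2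
  have B : ∫ c in t..(1:ℝ), min t c = ∫ c in t..(1:ℝ), t := by
    apply intervalIntegral.integral_congr
    intro c hc
    rw [Set.uIcc_of_le h1] at hc
    exact min_eq_left hc.1
  rw [A, B, integral_id, intervalIntegral.integral_const]
  simp; ring

lemma int_min_sq {t : ℝ} (h0 : 0 ≤ t) (h1 : t ≤ 1) :
    ∫ c in (0:ℝ)..1, (min t c) ^ 2 = t ^ 2 - 2 * t ^ 3 / 3 := by
  have hi1 : IntervalIntegrable (fun c => (min t c) ^ 2) volume 0 t :=
    ((continuous_const.min continuous_id).pow 2).intervalIntegrable _ _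
  have hi2 : IntervalIntegrable (fun c => (min t c) ^ 2) volume t 1 :=
    ((continuous_const.min continuous_id).pow 2).intervalIntegrable _ _
  rw [← intervalIntegral.integral_add_adjacent_intervals hi1 hi2]
  have A : ∫ c in (0:ℝ)..t, (min t c) ^ 2 = ∫ c in (0:ℝ)..t, c ^ 2 := by
    apply intervalIntegral.integral_congr
    intro c hc
    rw [Set.uIcc_of_le h0] at hc
    simp only [min_eq_right hc.2]
  have B : ∫ c in t..(1:ℝ), (min t c) ^ 2 = ∫ c in t..(1:ℝ), t ^ 2 := by
    apply intervalIntegral.integral_congr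
    intro c hc
    rw [Set.uIcc_of_le h1] at hc
    simp only [min_eq_left hc.1]
  rw [A, B, integral_pow, intervalIntegral.integral_const]
  simp; ring

lemma int_max {t : ℝ} (h0 : 0 ≤ t) (h1 : t ≤ 1) :
    ∫ c in (0:ℝ)..1, max t c = (1 + t ^ 2) / 2 := by
  have hi1 : IntervalIntegrable (fun c => max t c) volume 0 t :=
    (continuous_const.max continuous_id).intervalIntegrable _ _
  have hi2 : IntervalIntegrable (fun c => max t c) volume t 1 :=
    (continuous_const.max continuous_id).intervalIntegrable _ _
  rw [← intervalIntegral.integral_add_adjacent_intervals hi1 hi2]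
  have A : ∫ c in (0:ℝ)..t, max t c = ∫ c in (0:ℝ)..t, t := by
    apply intervalIntegral.integral_congr
    intro c hc
    rw [Set.uIcc_of_le h0] at hc
    exact max_eq_left hc.2
  have B : ∫ c in t..(1:ℝ), max t c = ∫ c in t..(1:ℝ), c := by
    apply intervalIntegral.integral_congr
    intro c hc
    rw [Set.uIcc_of_le h1] at hc
    exact max_eq_right hc.1
  rw [A, B, integral_id, intervalIntegral.integral_const]
  simp; ring

lemma int_max_sq {t : ℝ} (h0 : 0 ≤ t) (h1 : t ≤ 1) :
    ∫ c in (0:ℝ)..1, (max t c) ^ 2 = 1 / 3 + 2 * t ^ 3 / 3 := by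
  have hi1 : IntervalIntegrable (fun c => (max t c) ^ 2) volume 0 t :=
    ((continuous_const.max continuous_id).pow 2).intervalIntegrable _ _
  have hi2 : IntervalIntegrable (fun c => (max t c) ^ 2) volume t 1 :=
    ((continuous_const.max continuous_id).pow 2).intervalIntegrable _ _
  rw [← intervalIntegral.integral_add_adjacent_intervals hi1 hi2]
  have A : ∫ c in (0:ℝ)..t, (max t c) ^ 2 = ∫ c in (0:ℝ)..t, t ^ 2 := by
    apply intervalIntegral.integral_congr
    intro c hc
    rw [Set.uIcc_of_le h0] at hc
    simp only [max_eq_left hc.2]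
  have B : ∫ c in t..(1:ℝ), (max t c) ^ 2 = ∫ c in t..(1:ℝ), c ^ 2 := by
    apply intervalIntegral.integral_congr
    intro c hc
    rw [Set.uIcc_of_le h1] at hc
    simp only [max_eq_right hc.1]
  rw [A, B, integral_pow, intervalIntegral.integral_const]
  simp; ring

/-! ### Fubini for the triple product -/

lemma integral_n3 {f : ℝ × ℝ × ℝ → ℝ} (hf : Continuous f) :
    ∫ p, f p ∂n3 = ∫ a, ∫ b, ∫ c, f (a, b, c) ∂m1 ∂m1 ∂m1 := by
  rw [n3, integral_prod _ (by rw [← n3]; exact integrable_n3 hf)]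
  congr 1
  funext a
  exact integral_prod _ (integrable_n2 (hf.comp (continuous_const.prodMk continuous_id)))

/-! ### The functions H i -/

noncomputable def H : Fin 3 → ℝ × ℝ × ℝ → ℝ :=
  ![fun p => min p.1 (min p.2.1 p.2.2),
    fun p => p.1 + p.2.1 + p.2.2 - min p.1 (min p.2.1 p.2.2) - max p.1 (max p.2.1 p.2.2),
    fun p => max p.1 (max p.2.1 p.2.2)]

lemma contH (i : Fin 3) : Continuous (H i) := by
  fin_cases i
  · show Continuous fun p : ℝ × ℝ × ℝ => min p.1 (min p.2.1 p.2.2)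
    fun_prop
  · show Continuous fun p : ℝ × ℝ × ℝ =>
      p.1 + p.2.1 + p.2.2 - min p.1 (min p.2.1 p.2.2) - max p.1 (max p.2.1 p.2.2)
    fun_prop
  · show Continuous fun p : ℝ × ℝ × ℝ => max p.1 (max p.2.1 p.2.2)
    fun_prop

lemma orderStat_eq (x : Fin 3 → ℝ) (i : Fin 3) : orderStat x i = H i (x 0, x 1, x 2) := by
  fin_cases i
  · simpa [H] using orderStat0 x
  · show orderStat x 1 = H 1 (x 0, x 1, x 2)
    rw [orderStat1, orderStat0, orderStat2]
    simp [H]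
  · simpa [H] using orderStat2 x

noncomputable def Mi (i : Fin 3) : ℝ := ∫ p, H i p ∂n3
noncomputable def Qi (i : Fin 3) : ℝ := ∫ p, (H i p) ^ 2 ∂n3

/-! ### Values of the M's -/

lemma Mi0 : Mi 0 = 1 / 4 := by
  have hH : H 0 = fun p : ℝ × ℝ × ℝ => min p.1 (min p.2.1 p.2.2) := rfl
  rw [Mi, hH, integral_n3 (by fun_prop)]
  have step2 : ∀ a ∈ Set.Icc (0:ℝ) 1,
      ∫ b, ∫ c, min a (min b c) ∂m1 ∂m1 = a - a ^ 2 + a ^ 3 / 3 := by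
    intro a ha
    have step1 : ∀ b ∈ Set.Icc (0:ℝ) 1,
        ∫ c, min a (min b c) ∂m1 = min a b - (min a b) ^ 2 / 2 := by
      intro b hb
      have hmm : (fun c => min a (min b c)) = fun c => min (min a b) c :=
        funext fun c => (min_assoc a b c).symm
      rw [hmm, integral_m1, int_min (le_min ha.1 hb.1) (le_trans (min_le_left _ _) ha.2)]
    calc ∫ b, ∫ c, min a (min b c) ∂m1 ∂m1
        = ∫ b in Set.Icc (0:ℝ) 1, (min a b - (min a b) ^ 2 / 2) := by
          rw [m1]; exact setIntegral_congr_fun measurableSet_Icc step1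
      _ = ∫ b, (min a b - (min a b) ^ 2 / 2) ∂m1 := by rw [m1]
      _ = (∫ b, min a b ∂m1) - (∫ b, (min a b) ^ 2 ∂m1) / 2 := by
          rw [integral_sub (integrable_m1 (by fun_prop)) (integrable_m1 (by fun_prop)),
            integral_div]
      _ = (a - a ^ 2 / 2) - (a ^ 2 - 2 * a ^ 3 / 3) / 2 := by
          rw [integral_m1, integral_m1, int_min ha.1 ha.2, int_min_sq ha.1 ha.2]
      _ = a - a ^ 2 + a ^ 3 / 3 := by ring
  calc (∫ a, ∫ b, ∫ c, min a (min b c) ∂m1 ∂m1 ∂m1)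
      = ∫ a in Set.Icc (0:ℝ) 1, (a - a ^ 2 + a ^ 3 / 3) := by
        rw [m1]; exact setIntegral_congr_fun measurableSet_Icc step2
    _ = ∫ a, (a - a ^ 2 + a ^ 3 / 3) ∂m1 := by rw [m1]
    _ = ∫ a in (0:ℝ)..1, (0 + 1 * a + (-1) * a ^ 2 + (1/3) * a ^ 3) := by
        rw [integral_m1]; exact intervalIntegral.integral_congr fun x _ => by ring
    _ = 1 / 4 := by rw [poly_int]; norm_num

lemma Mi2 : Mi 2 = 3 / 4 := by
  have hH : H 2 = fun p : ℝ × ℝ × ℝ => max p.1 (max p.2.1 p.2.2) := rfl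
  rw [Mi, hH, integral_n3 (by fun_prop)]
  have step2 : ∀ a ∈ Set.Icc (0:ℝ) 1,
      ∫ b, ∫ c, max a (max b c) ∂m1 ∂m1 = 2 / 3 + a ^ 3 / 3 := by
    intro a ha
    have step1 : ∀ b ∈ Set.Icc (0:ℝ) 1,
        ∫ c, max a (max b c) ∂m1 = (1 + (max a b) ^ 2) / 2 := by
      intro b hb
      have hmm : (fun c => max a (max b c)) = fun c => max (max a b) c :=
        funext fun c => (max_assoc a b c).symm
      rw [hmm, integral_m1, int_max (le_trans ha.1 (le_max_left _ _)) (max_le ha.2 hb.2)]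
    calc ∫ b, ∫ c, max a (max b c) ∂m1 ∂m1
        = ∫ b in Set.Icc (0:ℝ) 1, ((1 + (max a b) ^ 2) / 2) := by
          rw [m1]; exact setIntegral_congr_fun measurableSet_Icc step1
      _ = ∫ b, ((1 + (max a b) ^ 2) / 2) ∂m1 := by rw [m1]
      _ = (∫ b, (1 + (max a b) ^ 2) ∂m1) / 2 := by rw [integral_div]
      _ = (1 + ∫ b, (max a b) ^ 2 ∂m1) / 2 := by
          rw [integral_add (integrable_const _) (integrable_m1 (by fun_prop))]
          simp
      _ = (1 + (1 / 3 + 2 * a ^ 3 / 3)) / 2 := by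
          rw [integral_m1, int_max_sq ha.1 ha.2]
      _ = 2 / 3 + a ^ 3 / 3 := by ring
  calc (∫ a, ∫ b, ∫ c, max a (max b c) ∂m1 ∂m1 ∂m1)
      = ∫ a in Set.Icc (0:ℝ) 1, (2 / 3 + a ^ 3 / 3) := by
        rw [m1]; exact setIntegral_congr_fun measurableSet_Icc step2
    _ = ∫ a, (2 / 3 + a ^ 3 / 3) ∂m1 := by rw [m1]
    _ = ∫ a in (0:ℝ)..1, ((2:ℝ)/3 + 0 * a + 0 * a ^ 2 + (1/3) * a ^ 3) := by
        rw [integral_m1]; exact intervalIntegral.integral_congr fun x _ => by ring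
    _ = 3 / 4 := by rw [poly_int]; norm_num

lemma Msum : ∫ p : ℝ × ℝ × ℝ, (p.1 + p.2.1 + p.2.2) ∂n3 = 3 / 2 := by
  rw [integral_n3 (by fun_prop)]
  have inner : ∀ a b : ℝ, ∫ c, (a + b + c) ∂m1 = a + b + 1 / 2 := by
    intro a b
    rw [integral_m1]
    have : ∫ c in (0:ℝ)..1, (a + b + c)
        = ∫ c in (0:ℝ)..1, ((a + b) + 1 * c + 0 * c ^ 2 + 0 * c ^ 3) :=
      intervalIntegral.integral_congr fun x _ => by ring
    rw [this, poly_int]; ring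
  simp only [inner]
  have inner2 : ∀ a : ℝ, ∫ b, (a + b + 1 / 2) ∂m1 = a + 1 := by
    intro a
    rw [integral_m1]
    have : ∫ b in (0:ℝ)..1, (a + b + 1 / 2)
        = ∫ b in (0:ℝ)..1, ((a + 1/2) + 1 * b + 0 * b ^ 2 + 0 * b ^ 3) :=
      intervalIntegral.integral_congr fun x _ => by ring
    rw [this, poly_int]; ring
  simp only [inner2]
  rw [integral_m1]
  have : ∫ a in (0:ℝ)..1, (a + 1)
      = ∫ a in (0:ℝ)..1, ((1:ℝ) + 1 * a + 0 * a ^ 2 + 0 * a ^ 3) :=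
    intervalIntegral.integral_congr fun x _ => by ring
  rw [this, poly_int]; norm_num

lemma Mi1 : Mi 1 = 1 / 2 := by
  rw [Mi]
  show (∫ p : ℝ × ℝ × ℝ, (p.1 + p.2.1 + p.2.2 - H 0 p - H 2 p) ∂n3) = 1 / 2
  have hsum : Integrable (fun p : ℝ × ℝ × ℝ => p.1 + p.2.1 + p.2.2) n3 :=
    integrable_n3 (by fun_prop)
  have h02 : Integrable (fun p : ℝ × ℝ × ℝ => p.1 + p.2.1 + p.2.2 - H 0 p) n3 :=
    hsum.sub (integrable_n3 (contH 0))
  rw [integral_sub h02 (integrable_n3 (contH 2)), integral_sub hsum (integrable_n3 (contH 0))]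
  have h0 : ∫ p, H 0 p ∂n3 = 1 / 4 := Mi0
  have h2 : ∫ p, H 2 p ∂n3 = 3 / 4 := Mi2
  rw [Msum, h0, h2]; norm_num

/-! ### Sum of the Q's -/

lemma Hsq_sum (p : ℝ × ℝ × ℝ) :
    (H 0 p) ^ 2 + (H 1 p) ^ 2 + (H 2 p) ^ 2 = p.1 ^ 2 + p.2.1 ^ 2 + p.2.2 ^ 2 := by
  obtain ⟨x, y, z⟩ := p
  have hv : ∀ i, orderStat ![x, y, z] i = H i (x, y, z) := by
    intro i
    rw [orderStat_eq]
    simp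
  have h := Equiv.sum_comp (Tuple.sort ![x, y, z]) (fun j => (![x, y, z] j) ^ 2)
  simp only [Fin.sum_univ_three, Matrix.cons_val_zero, Matrix.cons_val_one, Matrix.head_cons,
    Matrix.cons_val_two, Matrix.tail_cons] at h
  rw [← hv 0, ← hv 1, ← hv 2]
  simpa [orderStat] using h

lemma Qsum : Qi 0 + Qi 1 + Qi 2 = 1 := by
  have hi : ∀ i, Integrable (fun p : ℝ × ℝ × ℝ => (H i p) ^ 2) n3 :=
    fun i => integrable_n3 ((contH i).pow 2)
  simp only [Qi]
  have h01 : Integrable (fun p : ℝ × ℝ × ℝ => (H 0 p) ^ 2 + (H 1 p) ^ 2) n3 :=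
    (hi 0).add (hi 1)
  rw [← integral_add (hi 0) (hi 1), ← integral_add h01 (hi 2)]
  have key : ∫ p : ℝ × ℝ × ℝ, ((H 0 p) ^ 2 + (H 1 p) ^ 2 + (H 2 p) ^ 2) ∂n3
      = ∫ p : ℝ × ℝ × ℝ, (p.1 ^ 2 + p.2.1 ^ 2 + p.2.2 ^ 2) ∂n3 := by
    congr 1
    funext p
    exact Hsq_sum p
  rw [key, integral_n3 (by fun_prop)]
  have inner : ∀ a b : ℝ, ∫ c, (a ^ 2 + b ^ 2 + c ^ 2) ∂m1 = a ^ 2 + b ^ 2 + 1 / 3 := by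
    intro a b
    rw [integral_m1]
    have h2 : ∫ c in (0:ℝ)..1, (a ^ 2 + b ^ 2 + c ^ 2)
        = ∫ c in (0:ℝ)..1, ((a ^ 2 + b ^ 2) + 0 * c + 1 * c ^ 2 + 0 * c ^ 3) :=
      intervalIntegral.integral_congr fun x _ => by ring
    rw [h2, poly_int]; ring
  simp only [inner]
  have inner2 : ∀ a : ℝ, ∫ b, (a ^ 2 + b ^ 2 + 1 / 3) ∂m1 = a ^ 2 + 2 / 3 := by
    intro a
    rw [integral_m1]
    have h2 : ∫ b in (0:ℝ)..1, (a ^ 2 + b ^ 2 + 1 / 3)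
        = ∫ b in (0:ℝ)..1, ((a ^ 2 + 1 / 3) + 0 * b + 1 * b ^ 2 + 0 * b ^ 3) :=
      intervalIntegral.integral_congr fun x _ => by ring
    rw [h2, poly_int]; ring
  simp only [inner2]
  rw [integral_m1]
  have h2 : ∫ a in (0:ℝ)..1, (a ^ 2 + 2 / 3)
      = ∫ a in (0:ℝ)..1, ((2:ℝ) / 3 + 0 * a + 1 * a ^ 2 + 0 * a ^ 3) :=
    intervalIntegral.integral_congr fun x _ => by ring
  rw [h2, poly_int]; norm_num

/-! ### The basic term integral -/

lemma int_fst_sq (i : Fin 3) :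
    ∫ p : (ℝ × ℝ × ℝ) × (ℝ × ℝ × ℝ), (H i p.1) ^ 2 ∂(n3.prod n3) = Qi i := by
  have h := integral_prod_mul (μ := n3) (ν := n3) (fun x => (H i x) ^ 2) (fun _ => (1:ℝ))
  simpa [Qi] using h

lemma int_snd_sq (j : Fin 3) :
    ∫ p : (ℝ × ℝ × ℝ) × (ℝ × ℝ × ℝ), (H j p.2) ^ 2 ∂(n3.prod n3) = Qi j := by
  have h := integral_prod_mul (μ := n3) (ν := n3) (fun _ => (1:ℝ)) (fun y => (H j y) ^ 2)
  simpa [Qi] using h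

lemma int_cross (i j : Fin 3) :
    ∫ p : (ℝ × ℝ × ℝ) × (ℝ × ℝ × ℝ), H i p.1 * H j p.2 ∂(n3.prod n3) = Mi i * Mi j := by
  have h := integral_prod_mul (μ := n3) (ν := n3) (H i) (H j)
  simpa [Mi] using h

lemma Eterm (i j : Fin 3) :
    ∫ p : (ℝ × ℝ × ℝ) × (ℝ × ℝ × ℝ), (H i p.1 - H j p.2) ^ 2 ∂(n3.prod n3)
      = Qi i + Qi j - 2 * (Mi i * Mi j) := by
  have key : ∀ p : (ℝ × ℝ × ℝ) × (ℝ × ℝ × ℝ), (H i p.1 - H j p.2) ^ 2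
      = ((H i p.1) ^ 2 + (H j p.2) ^ 2) - 2 * (H i p.1 * H j p.2) := fun p => by ring
  simp only [key]
  have h1 : Integrable (fun p : (ℝ × ℝ × ℝ) × (ℝ × ℝ × ℝ) => (H i p.1) ^ 2) (n3.prod n3) :=
    integrable_n6 (((contH i).comp continuous_fst).pow 2)
  have h2 : Integrable (fun p : (ℝ × ℝ × ℝ) × (ℝ × ℝ × ℝ) => (H j p.2) ^ 2) (n3.prod n3) :=
    integrable_n6 (((contH j).comp continuous_snd).pow 2)
  have h12 : Integrable
      (fun p : (ℝ × ℝ × ℝ) × (ℝ × ℝ × ℝ) => (H i p.1) ^ 2 + (H j p.2) ^ 2) (n3.prod n3) :=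
    h1.add h2
  have h3 : Integrable
      (fun p : (ℝ × ℝ × ℝ) × (ℝ × ℝ × ℝ) => 2 * (H i p.1 * H j p.2)) (n3.prod n3) :=
    integrable_n6 (continuous_const.mul
      (((contH i).comp continuous_fst).mul ((contH j).comp continuous_snd)))
  rw [integral_sub h12 h3, integral_add h1 h2, integral_const_mul,
    int_fst_sq, int_snd_sq, int_cross]

/-! ### The cost formula -/

noncomputable def CC (π : Fin 3 → Fin 3) (p : (ℝ × ℝ × ℝ) × (ℝ × ℝ × ℝ)) : ℝ :=
  (H 0 p.1 - H (π 0) p.2) ^ 2 + (H 0 p.1 - H (π 2) p.2) ^ 2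
  + (H 2 p.1 - H (π 1) p.2) ^ 2 + (H 2 p.1 - H (π 0) p.2) ^ 2
  + (H 1 p.1 - H (π 2) p.2) ^ 2 + (H 1 p.1 - H (π 1) p.2) ^ 2

lemma mp6 : MeasurePreserving (Prod.map ⇑e3 ⇑e3)
    ((Measure.pi fun _ : Fin 3 => m1).prod (Measure.pi fun _ : Fin 3 => m1)) (n3.prod n3) :=
  mp3.prod mp3

lemma cost_int (π : Fin 3 → Fin 3) :
    ∫ q, costN3 π q ∂(unifPair 3) =
      (Qi 0 + Qi (π 0) - 2 * (Mi 0 * Mi (π 0))) + (Qi 0 + Qi (π 2) - 2 * (Mi 0 * Mi (π 2)))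
      + (Qi 2 + Qi (π 1) - 2 * (Mi 2 * Mi (π 1))) + (Qi 2 + Qi (π 0) - 2 * (Mi 2 * Mi (π 0)))
      + (Qi 1 + Qi (π 2) - 2 * (Mi 1 * Mi (π 2)))
      + (Qi 1 + Qi (π 1) - 2 * (Mi 1 * Mi (π 1))) := by
  have hq : ∀ q : (Fin 3 → ℝ) × (Fin 3 → ℝ), costN3 π q = CC π (Prod.map ⇑e3 ⇑e3 q) := by
    intro q
    simp only [costN3, orderStat_eq]
    rfl
  have hup : unifPair 3
      = (Measure.pi fun _ : Fin 3 => m1).prod (Measure.pi fun _ : Fin 3 => m1) := rfl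
  have ig : ∀ i j : Fin 3, Integrable
      (fun p : (ℝ × ℝ × ℝ) × (ℝ × ℝ × ℝ) => (H i p.1 - H j p.2) ^ 2) (n3.prod n3) :=
    fun i j => integrable_n6
      ((((contH i).comp continuous_fst).sub ((contH j).comp continuous_snd)).pow 2)
  have i1 := ig 0 (π 0)
  have i2 := ig 0 (π 2)
  have i3 := ig 2 (π 1)
  have i4 := ig 2 (π 0)
  have i5 := ig 1 (π 2)
  have i6 := ig 1 (π 1)
  have i12 : Integrable (fun p : (ℝ × ℝ × ℝ) × (ℝ × ℝ × ℝ) =>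
      (H 0 p.1 - H (π 0) p.2) ^ 2 + (H 0 p.1 - H (π 2) p.2) ^ 2) (n3.prod n3) := i1.add i2
  have i123 : Integrable (fun p : (ℝ × ℝ × ℝ) × (ℝ × ℝ × ℝ) =>
      (H 0 p.1 - H (π 0) p.2) ^ 2 + (H 0 p.1 - H (π 2) p.2) ^ 2
      + (H 2 p.1 - H (π 1) p.2) ^ 2) (n3.prod n3) := i12.add i3
  have i1234 : Integrable (fun p : (ℝ × ℝ × ℝ) × (ℝ × ℝ × ℝ) =>
      (H 0 p.1 - H (π 0) p.2) ^ 2 + (H 0 p.1 - H (π 2) p.2) ^ 2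
      + (H 2 p.1 - H (π 1) p.2) ^ 2 + (H 2 p.1 - H (π 0) p.2) ^ 2) (n3.prod n3) := i123.add i4
  have i12345 : Integrable (fun p : (ℝ × ℝ × ℝ) × (ℝ × ℝ × ℝ) =>
      (H 0 p.1 - H (π 0) p.2) ^ 2 + (H 0 p.1 - H (π 2) p.2) ^ 2
      + (H 2 p.1 - H (π 1) p.2) ^ 2 + (H 2 p.1 - H (π 0) p.2) ^ 2
      + (H 1 p.1 - H (π 2) p.2) ^ 2) (n3.prod n3) := i1234.add i5
  calc ∫ q, costN3 π q ∂(unifPair 3)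
      = ∫ q, CC π (Prod.map ⇑e3 ⇑e3 q)
          ∂((Measure.pi fun _ : Fin 3 => m1).prod (Measure.pi fun _ : Fin 3 => m1)) := by
        rw [← hup]; simp only [hq]
    _ = ∫ p, CC π p ∂(n3.prod n3) :=
        mp6.integral_comp (e3.measurableEmbedding.prodMap e3.measurableEmbedding) _
    _ = _ := by
        simp only [CC]
        rw [integral_add i12345 i6, integral_add i1234 i5, integral_add i123 i4,
          integral_add i12 i3, integral_add i1 i2, Eterm 0 (π 0), Eterm 0 (π 2),
          Eterm 2 (π 1), Eterm 2 (π 0), Eterm 1 (π 2), Eterm 1 (π 1)]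

/-! ### Evaluations -/

lemma val1 : ∫ q, costN3 ![1, 2, 0] q ∂(unifPair 3) = 3 / 4 := by
  rw [cost_int]
  simp only [Matrix.cons_val_zero, Matrix.cons_val_one, Matrix.head_cons,
    Matrix.cons_val_two, Matrix.tail_cons]
  rw [Mi0, Mi1, Mi2]
  linear_combination 4 * Qsum

lemma val2 : ∫ q, costN3 ![0, 2, 1] q ∂(unifPair 3) = 7 / 8 := by
  rw [cost_int]
  simp only [Matrix.cons_val_zero, Matrix.cons_val_one, Matrix.head_cons,
    Matrix.cons_val_two, Matrix.tail_cons]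
  rw [Mi0, Mi1, Mi2]
  linear_combination 4 * Qsum

lemma val3 : ∫ q, costN3 ![2, 1, 0] q ∂(unifPair 3) = 7 / 8 := by
  rw [cost_int]
  simp only [Matrix.cons_val_zero, Matrix.cons_val_one, Matrix.head_cons,
    Matrix.cons_val_two, Matrix.tail_cons]
  rw [Mi0, Mi1, Mi2]
  linear_combination 4 * Qsum

lemma val4 : ∫ q, costN3 ![0, 1, 2] q ∂(unifPair 3) = 9 / 8 := by
  rw [cost_int]
  simp only [Matrix.cons_val_zero, Matrix.cons_val_one, Matrix.head_cons,
    Matrix.cons_val_two, Matrix.tail_cons]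
  rw [Mi0, Mi1, Mi2]
  linear_combination 4 * Qsum

lemma val5 : ∫ q, costN3 ![2, 0, 1] q ∂(unifPair 3) = 9 / 8 := by
  rw [cost_int]
  simp only [Matrix.cons_val_zero, Matrix.cons_val_one, Matrix.head_cons,
    Matrix.cons_val_two, Matrix.tail_cons]
  rw [Mi0, Mi1, Mi2]
  linear_combination 4 * Qsum

lemma val6 : ∫ q, costN3 ![1, 0, 2] q ∂(unifPair 3) = 5 / 4 := by
  rw [cost_int]
  simp only [Matrix.cons_val_zero, Matrix.cons_val_one, Matrix.head_cons,
    Matrix.cons_val_two, Matrix.tail_cons]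
  rw [Mi0, Mi1, Mi2]
  linear_combination 4 * Qsum

end AvgCost3

open AvgCost3 in
/-- **The case `N = 3`.**  Writing a permutation `π ∈ S₃` by its (1-indexed) list of
values, the average costs are `E[E((2,3,1))] = 3/4`,
`E[E((1,3,2))] = E[E((3,2,1))] = 7/8`, `E[E((1,2,3))] = E[E((3,1,2))] = 9/8`, and
`E[E((2,1,3))] = 5/4`; in particular the criss-cross cycle `π = (2,3,1)` has the
smallest average cost. -/
theorem average_costs_three_points :
    (∫ q, costN3 ![1, 2, 0] q ∂(unifPair 3) = 3 / 4) ∧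
    (∫ q, costN3 ![0, 2, 1] q ∂(unifPair 3) = 7 / 8) ∧
    (∫ q, costN3 ![2, 1, 0] q ∂(unifPair 3) = 7 / 8) ∧
    (∫ q, costN3 ![0, 1, 2] q ∂(unifPair 3) = 9 / 8) ∧
    (∫ q, costN3 ![2, 0, 1] q ∂(unifPair 3) = 9 / 8) ∧
    (∫ q, costN3 ![1, 0, 2] q ∂(unifPair 3) = 5 / 4) ∧
    (∀ π : Equiv.Perm (Fin 3),
      ∫ q, costN3 ![1, 2, 0] q ∂(unifPair 3) ≤ ∫ q, costN3 (⇑π) q ∂(unifPair 3)) := by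
  refine ⟨val1, val2, val3, val4, val5, val6, fun π => ?_⟩
  rw [val1, cost_int ⇑π]
  have hQπ : Qi (π 0) + Qi (π 1) + Qi (π 2) = 1 := by
    have h := Equiv.sum_comp π Qi
    simp only [Fin.sum_univ_three] at h
    exact h.trans Qsum
  have hcase : ∀ i : Fin 3, i = 0 ∨ i = 1 ∨ i = 2 := by decide
  have hinj := π.injective
  rcases hcase (π 0) with h0 | h0 | h0 <;> rcases hcase (π 1) with h1 | h1 | h1 <;>
    rcases hcase (π 2) with h2 | h2 | h2 <;>
    first
      | exact absurd (hinj (h0.trans h1.symm)) (by decide)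
      | exact absurd (hinj (h0.trans h2.symm)) (by decide)
      | exact absurd (hinj (h1.trans h2.symm)) (by decide)
      | (rw [h0, h1, h2] at hQπ ⊢; rw [Mi0, Mi1, Mi2]; linarith [hQπ])
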